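/- Draining-time positivity: let h̄ ≥ 0 be the cell average depth, H₊ and H₋ the numerical fluxes at the right and left interfaces, Δt^drain := Δx·h̄ / (max(0,H₊) + max(0,−H₋)) (interpreted as +∞ when the denominator is 0), and Δt₊ := min(Δt, Δt^drain_i₊), Δt₋ := min(Δt, Δt^drain_i₋) effective interface time steps satisfying Δt₊ = min(Δt, Δt^drain) whenever H₊ > 0 and Δt₋ = min(Δt, Δt^drain) whenever H₋ < 0. Then the update h^{n+1} = h̄ − (Δt₊·H₊ − Δt₋·H₋)/Δx satisfies h^{n+1} ≥ 0, provided Δt₊ ≤ Δt and Δt₋ ≤ Δt. -/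
import Mathlib


/-- Draining-time positivity: limiting the outgoing fluxes by the draining time
keeps the updated water height nonnegative. -/
theorem stmt5 (Δx Δt hbar Hp Hm Δtp Δtm Δtdrain : ℝ)
    (hΔx : 0 < Δx) (hΔt : 0 < Δt) (hh : 0 ≤ hbar)
    (hdrain : 0 < max 0 Hp + max 0 (-Hm) →
      Δtdrain = Δx * hbar / (max 0 Hp + max 0 (-Hm)))
    (hΔtp0 : 0 ≤ Δtp) (hΔtm0 : 0 ≤ Δtm)
    (hΔtp : Δtp ≤ Δt) (hΔtm : Δtm ≤ Δt)
    (houtp : 0 < Hp → Δtp = min Δt Δtdrain)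
    (houtm : Hm < 0 → Δtm = min Δt Δtdrain) :
    0 ≤ hbar - (Δtp * Hp - Δtm * Hm) / Δx := by
  by_cases hp : 0 < Hp
  case neg =>
    by_cases hm : Hm < 0
    case neg =>
      -- both fluxes are inflows: numerator nonpositive
      push_neg at hp hm
      have h1 : Δtp * Hp ≤ 0 := mul_nonpos_of_nonneg_of_nonpos hΔtp0 hp
      have h2 : 0 ≤ Δtm * Hm := mul_nonneg hΔtm0 hm
      have : (Δtp * Hp - Δtm * Hm) / Δx ≤ 0 :=
        div_nonpos_of_nonpos_of_nonneg (by linarith) hΔx.le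
      linarith
    case pos =>
      have hD : 0 < max 0 Hp + max 0 (-Hm) := by
        have : 0 < max 0 (-Hm) := lt_max_of_lt_right (by linarith)
        have : (0:ℝ) ≤ max 0 Hp := le_max_left _ _
        linarith
      have hdr := hdrain hD
      have hdr0 : 0 ≤ Δtdrain := by
        rw [hdr]; positivity
      have hkey : Δtdrain * (max 0 Hp + max 0 (-Hm)) = Δx * hbar := by
        rw [hdr]; field_simp
      push_neg at hp
      have h1 : Δtp * Hp ≤ Δtdrain * max 0 Hp := by
        have : Δtp * Hp ≤ 0 := mul_nonpos_of_nonneg_of_nonpos hΔtp0 hp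
        have : 0 ≤ Δtdrain * max 0 Hp := mul_nonneg hdr0 (le_max_left _ _)
        linarith
      have h2 : -(Δtm * Hm) ≤ Δtdrain * max 0 (-Hm) := by
        rw [houtm hm]
        have hle : min Δt Δtdrain ≤ Δtdrain := min_le_right _ _
        have hmax : max 0 (-Hm) = -Hm := max_eq_right (by linarith)
        rw [hmax]
        have : 0 < -Hm := by linarith
        nlinarith
      have hnum : Δtp * Hp - Δtm * Hm ≤ Δx * hbar := by
        have := hkey
        nlinarith [h1, h2]
      have : (Δtp * Hp - Δtm * Hm) / Δx ≤ hbar := by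
        rw [div_le_iff₀ hΔx]; nlinarith
      linarith
  case pos =>
    have hD : 0 < max 0 Hp + max 0 (-Hm) := by
      have : 0 < max 0 Hp := lt_max_of_lt_right hp
      have : (0:ℝ) ≤ max 0 (-Hm) := le_max_left _ _
      linarith
    have hdr := hdrain hD
    have hdr0 : 0 ≤ Δtdrain := by rw [hdr]; positivity
    have hkey : Δtdrain * (max 0 Hp + max 0 (-Hm)) = Δx * hbar := by
      rw [hdr]; field_simp
    have h1 : Δtp * Hp ≤ Δtdrain * max 0 Hp := by
      rw [houtp hp]
      have hle : min Δt Δtdrain ≤ Δtdrain := min_le_right _ _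
      have hmax : max 0 Hp = Hp := max_eq_right hp.le
      rw [hmax]
      nlinarith
    have h2 : -(Δtm * Hm) ≤ Δtdrain * max 0 (-Hm) := by
      by_cases hm : Hm < 0
      · rw [houtm hm]
        have hle : min Δt Δtdrain ≤ Δtdrain := min_le_right _ _
        have hmax : max 0 (-Hm) = -Hm := max_eq_right (by linarith)
        rw [hmax]
        nlinarith
      · push_neg at hm
        have : 0 ≤ Δtm * Hm := mul_nonneg hΔtm0 hm
        have : 0 ≤ Δtdrain * max 0 (-Hm) := mul_nonneg hdr0 (le_max_left _ _)
        linarith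
    have hnum : Δtp * Hp - Δtm * Hm ≤ Δx * hbar := by nlinarith [h1, h2]
    have : (Δtp * Hp - Δtm * Hm) / Δx ≤ hbar := by
      rw [div_le_iff₀ hΔx]; nlinarith
    linarith
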